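/- Every zero-dimensional subspace of ℝ is strongly zero-dimensional. -/
import Mathlib


open Set TopologicalSpace

theorem stmt10 (X : Set ℝ)
    -- the subspace `X` of `ℝ` is zero-dimensional: its clopen sets form a base
    (hzd : IsTopologicalBasis {U : Set ↥X | IsClopen U}) :
    -- `X` is strongly zero-dimensional: it is completely regular (the co-zero sets
    -- form a base) and disjoint zero-sets are separated by clopen sets
    IsTopologicalBasis {U : Set ↥X | ∃ f : ↥X → ℝ, Continuous f ∧ U = (f ⁻¹' {0})ᶜ} ∧
    ∀ f g : ↥X → ℝ, Continuous f → Continuous g → Disjoint (f ⁻¹' {0}) (g ⁻¹' {0}) →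
      ∃ U : Set ↥X, IsClopen U ∧ f ⁻¹' {0} ⊆ U ∧ U ⊆ (g ⁻¹' {0})ᶜ := by
  classical
  constructor
  · apply isTopologicalBasis_of_isOpen_of_nhds
    · rintro u ⟨f, hf, rfl⟩
      exact (isClosed_singleton.preimage hf).isOpen_compl
    · intro a u hau hu
      obtain ⟨v, hv, hav, hvu⟩ := hzd.exists_subset_of_mem_open hau hu
      refine ⟨v, ⟨v.piecewise 1 0, ?_, ?_⟩, hav, hvu⟩
      · exact continuous_const.piecewise (by simp [(hv : IsClopen v).frontier_eq]) continuous_const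
      · ext y
        by_cases h : y ∈ v <;> simp [Set.piecewise, h]
  · intro f g hf hg hdisj
    set A := f ⁻¹' {0} with hA'
    set B := g ⁻¹' {0} with hB'
    have hA : IsClosed A := isClosed_singleton.preimage hf
    have hB : IsClosed B := isClosed_singleton.preimage hg
    by_cases hne : Nonempty ↥X
    swap
    · exact ⟨∅, isClopen_empty, fun x _ => (hne ⟨x⟩).elim, fun x _ => (hne ⟨x⟩).elim⟩
    obtain ⟨x0⟩ := hne
    have key : ∀ x : ↥X, ∃ W : Set ↥X, IsClopen W ∧ x ∈ W ∧ (W ⊆ Aᶜ ∨ W ⊆ Bᶜ) := by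
      intro x
      by_cases hx : x ∈ A
      · have hxB : x ∈ Bᶜ := fun hxB => Set.disjoint_left.mp hdisj hx hxB
        obtain ⟨v, hv, hxv, hvu⟩ := hzd.exists_subset_of_mem_open hxB hB.isOpen_compl
        exact ⟨v, hv, hxv, Or.inr hvu⟩
      · obtain ⟨v, hv, hxv, hvu⟩ := hzd.exists_subset_of_mem_open hx hA.isOpen_compl
        exact ⟨v, hv, hxv, Or.inl hvu⟩
    choose W hWc hWmem hWalt using key
    obtain ⟨T, hTc, hTU⟩ :=
      TopologicalSpace.isOpen_iUnion_countable W (fun x => (hWc x).isOpen)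
    have hTuniv : ⋃ i ∈ T, W i = univ := by
      rw [hTU]
      exact eq_univ_of_forall fun x => mem_iUnion.2 ⟨x, hWmem x⟩
    have hTne : T.Nonempty := by
      rcases (eq_univ_iff_forall.mp hTuniv x0) with h
      obtain ⟨i, hiT, -⟩ := mem_iUnion₂.1 h
      exact ⟨i, hiT⟩
    obtain ⟨e, he⟩ := hTc.exists_eq_range hTne
    set w : ℕ → Set ↥X := fun n => W (e n) with hw
    have hcover : ∀ x : ↥X, ∃ n, x ∈ w n := by
      intro x
      have hx : x ∈ ⋃ i ∈ T, W i := hTuniv ▸ mem_univ x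
      obtain ⟨i, hiT, hxi⟩ := mem_iUnion₂.1 hx
      rw [he] at hiT
      obtain ⟨n, rfl⟩ := hiT
      exact ⟨n, hxi⟩
    set N : ↥X → ℕ := fun x => Nat.find (hcover x) with hN
    set W' : ℕ → Set ↥X := fun n => w n \ ⋃ m ∈ Finset.range n, w m with hW'
    have hW'c : ∀ n, IsClopen (W' n) := fun n =>
      (hWc _).diff (isClopen_biUnion_finset fun m _ => hWc _)
    have hmemW' : ∀ x, x ∈ W' (N x) := by
      intro x
      refine ⟨Nat.find_spec (hcover x), ?_⟩
      simp only [mem_iUnion, Finset.mem_range, not_exists]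
      intro m hm hxm
      exact Nat.find_min (hcover x) hm hxm
    have huniq : ∀ x n, x ∈ W' n → n = N x := by
      intro x n hxn
      by_contra hne'
      rcases lt_or_gt_of_ne hne' with h | h
      · exact Nat.find_min (hcover x) h hxn.1
      · exact hxn.2 (mem_biUnion (Finset.mem_range.2 h) (Nat.find_spec (hcover x)))
    set S : Set ℕ := {n | w n ⊆ Bᶜ} with hS
    have hcompl : (⋃ n ∈ S, W' n)ᶜ = ⋃ n ∈ Sᶜ, W' n := by
      ext x
      simp only [mem_compl_iff, mem_iUnion, exists_prop, not_exists, not_and]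
      constructor
      · intro h
        exact ⟨N x, fun hS' => h _ hS' (hmemW' x), hmemW' x⟩
      · rintro ⟨n, hnS, hxn⟩ m hmS hxm
        obtain rfl : n = m := (huniq x n hxn).trans (huniq x m hxm).symm
        exact hnS hmS
    refine ⟨⋃ n ∈ S, W' n, ⟨?_, isOpen_biUnion fun n _ => (hW'c n).isOpen⟩, ?_, ?_⟩
    · rw [← isOpen_compl_iff, hcompl]
      exact isOpen_biUnion fun n _ => (hW'c n).isOpen
    · intro x hx
      have hnS : N x ∈ S := by
        rcases hWalt (e (N x)) with h | h
        · exact absurd (h (Nat.find_spec (hcover x)) hx) not_false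
        · exact h
      exact mem_biUnion hnS (hmemW' x)
    · exact iUnion₂_subset fun n hn => (diff_subset).trans hn
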